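/- arXiv:2603.30017 — 3 statements merged into one kernel-verified Lean document; each statement's English description precedes it below -/
import Mathlib

section
/- Let σ > 0 and let X be a real random variable with E[X] = 0 and E[exp(|X/σ|)] ≤ 2, and let E be a {0,1}-valued random variable (on the same probability space) with P(E = 1) = p ∈ (0,1). Then E[X·E] ≤ ((1 + log 2)/log 2) · σ · h(p), where h(p) = −p log p − (1−p) log(1−p) is the binary entropy. -/
open MeasureTheory

private lemma ptwise_bound (σ t x : ℝ) (hσ : 0 < σ) :
    x ≤ σ * t + σ * Real.exp (-t) * Real.exp |x / σ| := by
  have h1 : |x / σ| - t ≤ Real.exp (|x / σ| - t) := by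
    have := Real.add_one_le_exp (|x / σ| - t); linarith
  have h2 : Real.exp (|x / σ| - t) = Real.exp (-t) * Real.exp |x / σ| := by
    rw [← Real.exp_add]; ring_nf
  have h3 : x / σ ≤ |x / σ| := le_abs_self _
  have h4 : x / σ ≤ t + Real.exp (-t) * Real.exp |x / σ| := by rw [h2] at h1; linarith
  calc x = σ * (x / σ) := by field_simp
    _ ≤ σ * (t + Real.exp (-t) * Real.exp |x / σ|) :=
        mul_le_mul_of_nonneg_left h4 hσ.le
    _ = _ := by ring

private lemma set_int_bound {Ω : Type*} [MeasurableSpace Ω] (μ : Measure Ω)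
    [IsProbabilityMeasure μ] (σ t : ℝ) (hσ : 0 < σ) (Y G : Ω → ℝ)
    (hY : Integrable Y μ) (hG : Integrable G μ) (hGpos : ∀ ω, 0 ≤ G ω)
    (hG2 : ∫ ω, G ω ∂μ ≤ 2) (A : Set Ω) (hA : MeasurableSet A)
    (hpt : ∀ ω, Y ω ≤ σ * t + σ * Real.exp (-t) * G ω) :
    ∫ ω in A, Y ω ∂μ ≤ σ * t * (μ A).toReal + σ * Real.exp (-t) * 2 := by
  have hc : 0 ≤ σ * Real.exp (-t) := by positivity
  have hint : Integrable (fun ω => σ * t + σ * Real.exp (-t) * G ω) μ :=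
    (integrable_const _).add (hG.const_mul _)
  have h1 : ∫ ω in A, Y ω ∂μ ≤ ∫ ω in A, (σ * t + σ * Real.exp (-t) * G ω) ∂μ :=
    setIntegral_mono_on hY.integrableOn hint.integrableOn hA (fun ω _ => hpt ω)
  have h2 : ∫ ω in A, (σ * t + σ * Real.exp (-t) * G ω) ∂μ
      = σ * t * (μ A).toReal + σ * Real.exp (-t) * ∫ ω in A, G ω ∂μ := by
    rw [integral_add ((integrableOn_const (measure_ne_top _ _) enorm_ne_top : IntegrableOn (fun _ => σ * t) A μ))
      (hG.integrableOn.const_mul _), setIntegral_const, integral_const_mul]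
    simp [smul_eq_mul, Measure.real]; ring
  have h3 : ∫ ω in A, G ω ∂μ ≤ ∫ ω, G ω ∂μ :=
    setIntegral_le_integral hG (Filter.Eventually.of_forall hGpos)
  have h4 : σ * Real.exp (-t) * ∫ ω in A, G ω ∂μ ≤ σ * Real.exp (-t) * 2 :=
    mul_le_mul_of_nonneg_left (h3.trans hG2) hc
  linarith

private lemma arith_bound (q : ℝ) (hq0 : 0 < q) (hq2 : q ≤ 1 / 2) :
    q * (1 + Real.log 2 - Real.log q) ≤
      ((1 + Real.log 2) / Real.log 2) *
        (-(q * Real.log q) - (1 - q) * Real.log (1 - q)) := by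
  have hl1 : (0.6931471803 : ℝ) < Real.log 2 := Real.log_two_gt_d9
  have hl2 : Real.log 2 < 0.6931471808 := Real.log_two_lt_d9
  have hl0 : (0 : ℝ) < Real.log 2 := by linarith
  have hq1 : q < 1 := by linarith
  have hL : Real.log q ≤ -Real.log 2 := by
    have h := Real.log_le_log hq0 hq2
    rw [show (1:ℝ)/2 = 2⁻¹ by norm_num, Real.log_inv] at h
    exact h
  have hlog1q : Real.log (1 - q) ≤ -q := by
    have := Real.log_le_sub_one_of_pos (show (0:ℝ) < 1 - q by linarith)
    linarith
  have hM : q * (1 - q) ≤ -((1 - q) * Real.log (1 - q)) := by nlinarith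
  have hM2 : q / 2 ≤ -((1 - q) * Real.log (1 - q)) := by nlinarith
  rw [div_mul_eq_mul_div, le_div_iff₀ hl0]
  nlinarith [mul_le_mul_of_nonneg_left hL hq0.le,
    mul_pos hq0 hl0, sq_nonneg (Real.log 2)]

/-- Let `σ > 0` and let `X` be a real random variable with `E[X] = 0` and
`E[exp(|X/σ|)] ≤ 2`, and let `E` be a `{0,1}`-valued random variable with
`P(E = 1) = p ∈ (0,1)`.  Then
`E[X·E] ≤ ((1 + log 2)/log 2) · σ · h(p)` where `h` is the binary entropy. -/
theorem expectation_mul_indicator_le_binEntropy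
    {Ω : Type*} [MeasurableSpace Ω] (μ : Measure Ω) [IsProbabilityMeasure μ]
    (σ : ℝ) (hσ : 0 < σ) (X E : Ω → ℝ)
    (hX_int : Integrable X μ) (hX_mean : ∫ ω, X ω ∂μ = 0)
    (hexp_int : Integrable (fun ω => Real.exp |X ω / σ|) μ)
    (hexp : ∫ ω, Real.exp |X ω / σ| ∂μ ≤ 2)
    (hE01 : ∀ ω, E ω = 0 ∨ E ω = 1) (hE_meas : Measurable E)
    (p : ℝ) (hp : p ∈ Set.Ioo (0:ℝ) 1) (hEp : μ {ω | E ω = 1} = ENNReal.ofReal p) :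
    ∫ ω, X ω * E ω ∂μ ≤
      ((1 + Real.log 2) / Real.log 2) * σ *
        (-(p * Real.log p) - (1 - p) * Real.log (1 - p)) := by
  obtain ⟨hp0, hp1⟩ := hp
  set A : Set Ω := {ω | E ω = 1} with hAdef
  have hA : MeasurableSet A := hE_meas (measurableSet_singleton 1)
  have hGpos : ∀ ω, (0:ℝ) ≤ Real.exp |X ω / σ| := fun ω => (Real.exp_pos _).le
  have hind : (fun ω => X ω * E ω) = A.indicator X := by
    funext ω
    rcases hE01 ω with h | h
    · have : ω ∉ A := by simp [hAdef, h]
      simp [Set.indicator_of_notMem this, h]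
    · have : ω ∈ A := by simp [hAdef, h]
      simp [Set.indicator_of_mem this, h]
  have hintA : ∫ ω, X ω * E ω ∂μ = ∫ ω in A, X ω ∂μ := by
    rw [hind, integral_indicator hA]
  rcases le_or_gt p (1/2) with hple | hpgt
  · -- case p ≤ 1/2
    set t : ℝ := Real.log 2 - Real.log p with ht
    have hexp_t : Real.exp (-t) = p / 2 := by
      rw [ht, neg_sub, Real.exp_sub, Real.exp_log hp0, Real.exp_log two_pos]
    have hbd := set_int_bound μ σ t hσ X (fun ω => Real.exp |X ω / σ|) hX_int
      hexp_int hGpos hexp A hA (fun ω => ptwise_bound σ t (X ω) hσ)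
    have hμA : (μ A).toReal = p := by rw [hEp, ENNReal.toReal_ofReal hp0.le]
    rw [hμA, hexp_t] at hbd
    have harith := arith_bound p hp0 hple
    have hfin : σ * (p * (1 + Real.log 2 - Real.log p)) ≤
        σ * (((1 + Real.log 2) / Real.log 2) *
          (-(p * Real.log p) - (1 - p) * Real.log (1 - p))) :=
      mul_le_mul_of_nonneg_left harith hσ.le
    rw [hintA]
    calc ∫ ω in A, X ω ∂μ ≤ σ * t * p + σ * (p / 2) * 2 := hbd
      _ = σ * (p * (1 + Real.log 2 - Real.log p)) := by rw [ht]; ring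
      _ ≤ σ * (((1 + Real.log 2) / Real.log 2) *
          (-(p * Real.log p) - (1 - p) * Real.log (1 - p))) := hfin
      _ = _ := by ring
  · -- case p > 1/2 : work with complement
    set q : ℝ := 1 - p with hqdef
    have hq0 : 0 < q := by simp [hqdef]; linarith
    have hqle : q ≤ 1/2 := by simp [hqdef]; linarith
    set t : ℝ := Real.log 2 - Real.log q with ht
    have hexp_t : Real.exp (-t) = q / 2 := by
      rw [ht, neg_sub, Real.exp_sub, Real.exp_log hq0, Real.exp_log two_pos]
    have hμAc : (μ Aᶜ).toReal = q := by
      rw [prob_compl_eq_one_sub hA, hEp]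
      rw [show (1 : ENNReal) = ENNReal.ofReal 1 from ENNReal.ofReal_one.symm,
        ← ENNReal.ofReal_sub _ hp0.le, ENNReal.toReal_ofReal (by linarith)]
    have hptneg : ∀ ω, -X ω ≤ σ * t + σ * Real.exp (-t) * Real.exp |X ω / σ| := by
      intro ω
      have := ptwise_bound σ t (-X ω) hσ
      rwa [neg_div, abs_neg] at this
    have hbd := set_int_bound μ σ t hσ (fun ω => -X ω) (fun ω => Real.exp |X ω / σ|)
      hX_int.neg hexp_int hGpos hexp Aᶜ hA.compl hptneg
    rw [hμAc, hexp_t] at hbd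
    have hcompl : ∫ ω in A, X ω ∂μ + ∫ ω in Aᶜ, X ω ∂μ = ∫ ω, X ω ∂μ :=
      integral_add_compl hA hX_int
    have hneg : ∫ ω in Aᶜ, (fun ω => -X ω) ω ∂μ = -∫ ω in Aᶜ, X ω ∂μ :=
      integral_neg _
    have hAeq : ∫ ω in A, X ω ∂μ = ∫ ω in Aᶜ, (fun ω => -X ω) ω ∂μ := by
      rw [hneg]; rw [hX_mean] at hcompl; linarith
    have harith := arith_bound q hq0 hqle
    have hsym : -(q * Real.log q) - (1 - q) * Real.log (1 - q)
        = -(p * Real.log p) - q * Real.log q := by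
      have h1 : (1:ℝ) - q = p := by rw [hqdef]; ring
      rw [h1]; ring
    rw [hsym] at harith
    have hfin : σ * (q * (1 + Real.log 2 - Real.log q)) ≤
        σ * (((1 + Real.log 2) / Real.log 2) *
          (-(p * Real.log p) - q * Real.log q)) :=
      mul_le_mul_of_nonneg_left harith hσ.le
    rw [hintA, hAeq]
    calc ∫ ω in Aᶜ, (fun ω => -X ω) ω ∂μ ≤ σ * t * q + σ * (q / 2) * 2 := hbd
      _ = σ * (q * (1 + Real.log 2 - Real.log q)) := by rw [ht]; ring
      _ ≤ σ * (((1 + Real.log 2) / Real.log 2) *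
          (-(p * Real.log p) - q * Real.log q)) := hfin
      _ = _ := by ring
end

section
/- Let σ > 0 and let X be a real random variable with E[exp(|X/σ|)] ≤ 2, and let E be a {0,1}-valued random variable (on the same probability space) with P(E = 1) = p ∈ (0,1]. Then E[|X|·E] ≤ p·σ·(1 + log(1/p)). -/
open MeasureTheory

lemma fenchel_young_aux (x c : ℝ) (hc : 0 < c) :
    x * c ≤ Real.exp x + (c * Real.log c - c) := by
  have h := Real.add_one_le_exp (x - Real.log c)
  have he : Real.exp (x - Real.log c) = Real.exp x / c := by
    rw [Real.exp_sub, Real.exp_log hc]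
  rw [he] at h
  rw [le_div_iff₀ hc] at h
  nlinarith

/-- Let `σ > 0` and let `X` be a real random variable with `E[exp(|X/σ|)] ≤ 2`,
and let `E` be a `{0,1}`-valued random variable with `P(E = 1) = p ∈ (0,1]`.
Then `E[|X|·E] ≤ p·σ·(1 + log(1/p))`. -/
theorem expectation_abs_mul_indicator_le
    {Ω : Type*} [MeasurableSpace Ω] (μ : Measure Ω) [IsProbabilityMeasure μ]
    (σ : ℝ) (hσ : 0 < σ) (X E : Ω → ℝ)
    (hX_int : Integrable X μ)
    (hexp_int : Integrable (fun ω => Real.exp |X ω / σ|) μ)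
    (hexp : ∫ ω, Real.exp |X ω / σ| ∂μ ≤ 2)
    (hE01 : ∀ ω, E ω = 0 ∨ E ω = 1) (hE_meas : Measurable E)
    (p : ℝ) (hp : p ∈ Set.Ioc (0:ℝ) 1) (hEp : μ {ω | E ω = 1} = ENNReal.ofReal p) :
    ∫ ω, |X ω| * E ω ∂μ ≤ p * σ * (1 + Real.log (1/p)) := by
  obtain ⟨hp0, hp1⟩ := hp
  set c : ℝ := 2 / p with hc_def
  have hc : 0 < c := by positivity
  have hE_nonneg : ∀ ω, 0 ≤ E ω := fun ω => by rcases hE01 ω with h | h <;> simp [h]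
  have hE_le : ∀ ω, E ω ≤ 1 := fun ω => by rcases hE01 ω with h | h <;> simp [h]
  have hE_int : Integrable E μ := by
    apply Integrable.mono (integrable_const (1:ℝ)) hE_meas.aestronglyMeasurable
    filter_upwards with ω
    rw [Real.norm_eq_abs, abs_of_nonneg (hE_nonneg ω)]
    simpa using hE_le ω
  have hE_eq : E = Set.indicator {ω | E ω = 1} (fun _ => (1:ℝ)) := by
    funext ω
    rcases hE01 ω with h | h <;> simp [Set.indicator, h]
  have hsm : MeasurableSet {ω | E ω = 1} := hE_meas (measurableSet_singleton 1)
  have hint_E : ∫ ω, E ω ∂μ = p := by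
    conv_lhs => rw [hE_eq]
    rw [integral_indicator hsm]
    simp [hEp, measureReal_def, ENNReal.toReal_ofReal hp0.le]
  have hXE_int : Integrable (fun ω => |X ω| * E ω) μ := by
    apply Integrable.mono hX_int.abs (hX_int.abs.1.mul hE_meas.aestronglyMeasurable)
    filter_upwards with ω
    simp only [Pi.mul_apply, Real.norm_eq_abs, abs_abs, abs_mul,
      abs_of_nonneg (hE_nonneg ω)]
    nlinarith [abs_nonneg (X ω), hE_le ω, hE_nonneg ω]
  have hpt : ∀ ω, (c / σ) * (|X ω| * E ω) ≤
      Real.exp |X ω / σ| + E ω * (c * Real.log c - c) := by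
    intro ω
    rcases hE01 ω with h | h
    · simp only [h, mul_zero, zero_mul, add_zero]
      positivity
    · rw [h, mul_one, one_mul]
      have := fenchel_young_aux (|X ω| / σ) c hc
      rw [abs_div, abs_of_pos hσ]
      calc c / σ * |X ω| = (|X ω| / σ) * c := by ring
        _ ≤ _ := this
  have hmono := integral_mono (hXE_int.const_mul (c / σ))
    (hexp_int.add (hE_int.mul_const _)) hpt
  simp only [Pi.add_apply] at hmono
  rw [integral_const_mul, integral_add hexp_int (hE_int.mul_const _),
    integral_mul_const, hint_E] at hmono
  have hkey : (c / σ) * ∫ ω, |X ω| * E ω ∂μ ≤ 2 + p * (c * Real.log c - c) :=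
    hmono.trans (by linarith)
  have hpc : p * c = 2 := by rw [hc_def]; field_simp
  have hlog2 : Real.log 2 ≤ 1 := by
    have := Real.log_le_sub_one_of_pos (by norm_num : (0:ℝ) < 2)
    linarith
  have hlogc : Real.log c = Real.log 2 + Real.log (1 / p) := by
    rw [hc_def, Real.log_div two_ne_zero hp0.ne', Real.log_div one_ne_zero hp0.ne',
      Real.log_one]
    ring
  -- from hkey: (2/(pσ)) * I ≤ 2 + 2 log c − 2 = 2 log c
  have hI : ∫ ω, |X ω| * E ω ∂μ ≤ p * σ * Real.log c := by
    have h1 : p * (c * Real.log c - c) = 2 * Real.log c - 2 := by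
      rw [← hpc]; ring
    rw [h1] at hkey
    have hcσ : 0 < c / σ := by positivity
    have h2 : (c / σ) * (p * σ * Real.log c) = 2 * Real.log c := by
      rw [← hpc]; field_simp
    nlinarith [mul_le_mul_of_nonneg_left hkey (le_of_lt (by positivity : (0:ℝ) < p * σ / 2))]
  refine hI.trans ?_
  rw [hlogc]
  nlinarith [mul_pos hp0 hσ]
end

section
/- For every p ∈ (0,1), min( p(1 + log(1/p)), (1−p)(1 + log(1/(1−p))) ) ≤ ((1 + log 2)/log 2) · h(p), where h(p) = −p log p − (1−p) log(1−p) is the binary entropy. -/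
lemma aux_binEntropy (p : ℝ) (h0 : 0 < p) (h2 : p ≤ 1/2) :
    p * (1 + Real.log (1/p))
      ≤ ((1 + Real.log 2) / Real.log 2) *
          (-(p * Real.log p) - (1 - p) * Real.log (1 - p)) := by
  have l2 : 0 < Real.log 2 := Real.log_pos (by norm_num)
  have hlp : Real.log p ≤ Real.log (1/2) := Real.log_le_log h0 h2
  have hl2 : Real.log (1/2) = -Real.log 2 := by
    rw [Real.log_div one_ne_zero (by norm_num), Real.log_one]; ring
  have hA : p * Real.log 2 ≤ -(p * Real.log p) := by nlinarith [hlp, hl2]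
  have hB : 0 ≤ -((1 - p) * Real.log (1 - p)) := by
    have : Real.log (1 - p) ≤ 0 := Real.log_nonpos (by linarith) (by linarith)
    nlinarith
  rw [one_div, Real.log_inv, div_mul_eq_mul_div, le_div_iff₀ l2]
  nlinarith [hA, hB]

/-- For every `p ∈ (0,1)`,
`min(p(1 + log(1/p)), (1−p)(1 + log(1/(1−p)))) ≤ ((1 + log 2)/log 2) · h(p)`,
where `h(p) = −p log p − (1−p) log(1−p)` is the binary entropy. -/
theorem min_le_const_mul_binEntropy (p : ℝ) (hp : p ∈ Set.Ioo (0:ℝ) 1) :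
    min (p * (1 + Real.log (1/p))) ((1 - p) * (1 + Real.log (1/(1-p))))
      ≤ ((1 + Real.log 2) / Real.log 2) *
          (-(p * Real.log p) - (1 - p) * Real.log (1 - p)) := by
  obtain ⟨h0, h1⟩ := hp
  rcases le_or_gt p (1/2) with h | h
  · exact le_trans (min_le_left _ _) (aux_binEntropy p h0 h)
  · have := aux_binEntropy (1 - p) (by linarith) (by linarith)
    have e : 1 - (1 - p) = p := by ring
    rw [e] at this
    refine le_trans (min_le_right _ _) ?_
    calc (1 - p) * (1 + Real.log (1/(1-p)))
        ≤ ((1 + Real.log 2) / Real.log 2) *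
            (-((1 - p) * Real.log (1 - p)) - p * Real.log p) := this
      _ = _ := by ring
end
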